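/- arXiv:1404.7148 — 2 statements merged into one kernel-verified Lean document; each statement's English description precedes it below -/
import Mathlib

section
/- For integers N ≥ 1 and i, consider the formal differential operator E_i = ∑_{s₁>i, s₂>i} x_{s₁+s₂-i} ∂x_{s₁} ∂x_{s₂} acting on the polynomial ring ℂ[x_n : n ∈ ℤ]. If i₁, …, i_{N+1} are integers all greater than i, then E_i^N(x_{i₁} ⋯ x_{i_{N+1}}) = c_N · x_M, where M = i₁ + ⋯ + i_{N+1} - N·i and c_N = 2^N · ∏_{s=2}^{N+1} binom(s, 2). -/
open MvPolynomial

/-- The operator `E_i = ∑_{s₁>i, s₂>i} x_{s₁+s₂-i} ∂x_{s₁} ∂x_{s₂}` on `ℂ[x_n : n ∈ ℤ]`. -/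
noncomputable def Eop (i : ℤ) (p : MvPolynomial ℤ ℂ) : MvPolynomial ℤ ℂ :=
  ∑ᶠ s : ℤ × ℤ, if i < s.1 ∧ i < s.2 then
    X (s.1 + s.2 - i) * pderiv s.1 (pderiv s.2 p) else 0


lemma pderiv_prod_X {α : Type*} [DecidableEq α] (s : ℤ) (t : Finset α) (g : α → ℤ) :
    pderiv s (∏ m ∈ t, (X (g m) : MvPolynomial ℤ ℂ)) =
      ∑ k ∈ t, if g k = s then ∏ m ∈ t.erase k, (X (g m) : MvPolynomial ℤ ℂ) else 0 := by
  classical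
  induction t using Finset.induction_on with
  | empty => simp
  | @insert a t ha ih =>
    rw [Finset.prod_insert ha, pderiv_mul, ih, Finset.sum_insert ha, Finset.erase_insert ha]
    have hX : pderiv s (X (g a) : MvPolynomial ℤ ℂ) = if g a = s then 1 else 0 := by
      split
      · next h => rw [h]; exact pderiv_X_self s
      · next h => exact pderiv_X_of_ne h
    rw [hX, Finset.mul_sum]
    congr 1
    · split <;> simp
    · refine Finset.sum_congr rfl fun k hk => ?_
      rw [mul_ite, mul_zero]
      split
      · rw [Finset.erase_insert_of_ne (fun h => ha (by rw [h]; exact hk)),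
          Finset.prod_insert (fun h => ha (Finset.mem_of_mem_erase h))]
      · rfl

lemma pderiv2_prod_X {α : Type*} [DecidableEq α] (s₁ s₂ : ℤ) (t : Finset α) (g : α → ℤ) :
    pderiv s₁ (pderiv s₂ (∏ m ∈ t, (X (g m) : MvPolynomial ℤ ℂ))) =
      ∑ k ∈ t, ∑ l ∈ t.erase k, if g k = s₂ ∧ g l = s₁ then
        ∏ m ∈ (t.erase k).erase l, (X (g m) : MvPolynomial ℤ ℂ) else 0 := by
  rw [pderiv_prod_X, map_sum]
  refine Finset.sum_congr rfl fun k hk => ?_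
  by_cases h : g k = s₂
  · rw [if_pos h, pderiv_prod_X]
    refine Finset.sum_congr rfl fun l hl => ?_
    by_cases h2 : g l = s₁
    · rw [if_pos h2, if_pos ⟨h, h2⟩]
    · rw [if_neg h2, if_neg (fun hc => h2 hc.2)]
  · rw [if_neg h, map_zero]
    exact (Finset.sum_eq_zero fun l hl => by rw [if_neg (fun hc => h hc.1)]).symm

lemma Eop_prod_X {α : Type*} [DecidableEq α] (i : ℤ) (t : Finset α) (g : α → ℤ)
    (hg : ∀ k ∈ t, i < g k) :
    Eop i (∏ m ∈ t, (X (g m) : MvPolynomial ℤ ℂ)) =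
      ∑ k ∈ t, ∑ l ∈ t.erase k, X (g l + g k - i) *
        ∏ m ∈ (t.erase k).erase l, (X (g m) : MvPolynomial ℤ ℂ) := by
  classical
  set T : Finset (ℤ × ℤ) := (t.image g) ×ˢ (t.image g) with hT
  rw [Eop]
  rw [finsum_eq_sum_of_support_subset _ (s := T) ?hsupp]
  case hsupp =>
    intro s hs
    simp only [Function.mem_support] at hs
    have hDD : pderiv s.1 (pderiv s.2 (∏ m ∈ t, (X (g m) : MvPolynomial ℤ ℂ))) ≠ 0 := by
      intro h0
      apply hs; rw [h0, mul_zero]; split <;> rfl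
    rw [pderiv2_prod_X] at hDD
    obtain ⟨k, hk, hk2⟩ := Finset.exists_ne_zero_of_sum_ne_zero hDD
    obtain ⟨l, hl, hl2⟩ := Finset.exists_ne_zero_of_sum_ne_zero hk2
    have hc : g k = s.2 ∧ g l = s.1 := by
      by_contra hc; rw [if_neg hc] at hl2; exact hl2 rfl
    simp only [hT, Finset.coe_product, Set.mem_prod, Finset.mem_coe, Finset.mem_image]
    exact ⟨⟨l, Finset.mem_of_mem_erase hl, hc.2⟩, ⟨k, hk, hc.1⟩⟩
  have key : ∀ s : ℤ × ℤ, (if i < s.1 ∧ i < s.2 then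
      X (s.1 + s.2 - i) * pderiv s.1 (pderiv s.2 (∏ m ∈ t, (X (g m) : MvPolynomial ℤ ℂ))) else 0)
      = ∑ k ∈ t, ∑ l ∈ t.erase k, if (i < s.1 ∧ i < s.2) ∧ (g k = s.2 ∧ g l = s.1) then
          X (s.1 + s.2 - i) * ∏ m ∈ (t.erase k).erase l, (X (g m) : MvPolynomial ℤ ℂ) else 0 := by
    intro s
    rw [pderiv2_prod_X]
    by_cases hc : i < s.1 ∧ i < s.2
    · rw [if_pos hc, Finset.mul_sum]
      refine Finset.sum_congr rfl fun k hk => ?_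
      rw [Finset.mul_sum]
      refine Finset.sum_congr rfl fun l hl => ?_
      rw [mul_ite, mul_zero]
      by_cases h2 : g k = s.2 ∧ g l = s.1
      · rw [if_pos h2, if_pos ⟨hc, h2⟩]
      · rw [if_neg h2, if_neg (fun h => h2 h.2)]
    · rw [if_neg hc]
      exact (Finset.sum_eq_zero fun k hk => Finset.sum_eq_zero fun l hl => by
        rw [if_neg (fun h => hc h.1)]).symm
  rw [Finset.sum_congr rfl fun s _ => key s, Finset.sum_comm]
  refine Finset.sum_congr rfl fun k hk => ?_
  rw [Finset.sum_comm]
  refine Finset.sum_congr rfl fun l hl => ?_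
  have hlt : l ∈ t := Finset.mem_of_mem_erase hl
  have hmem : ((g l, g k) : ℤ × ℤ) ∈ T :=
    Finset.mem_product.2 ⟨Finset.mem_image_of_mem g hlt, Finset.mem_image_of_mem g hk⟩
  rw [Finset.sum_eq_single_of_mem ((g l, g k) : ℤ × ℤ) hmem
    (fun s hs hne => if_neg fun h => hne (Prod.ext h.2.2.symm h.2.1.symm)),
    if_pos ⟨⟨hg l hlt, hg k hk⟩, rfl, rfl⟩]

lemma DD_support_finite (p : MvPolynomial ℤ ℂ) :
    {s : ℤ × ℤ | pderiv s.1 (pderiv s.2 p) ≠ 0}.Finite := by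
  refine Set.Finite.subset (s := ⋃ b ∈ (p.vars : Set ℤ),
      ((pderiv b p).vars : Set ℤ) ×ˢ ({b} : Set ℤ)) ?_ ?_
  · exact (p.vars.finite_toSet).biUnion fun b _ =>
      ((pderiv b p).vars.finite_toSet).prod (Set.finite_singleton b)
  · intro s hs
    simp only [Set.mem_setOf_eq] at hs
    have h2 : s.2 ∈ p.vars := by
      by_contra h
      rw [pderiv_eq_zero_of_notMem_vars h, map_zero] at hs
      exact hs rfl
    have h1 : s.1 ∈ (pderiv s.2 p).vars := by
      by_contra h
      exact hs (pderiv_eq_zero_of_notMem_vars h)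
    simp only [Set.mem_iUnion, Set.mem_prod, Set.mem_singleton_iff, Finset.mem_coe]
    exact ⟨s.2, h2, h1, rfl⟩

lemma F_support_finite (i : ℤ) (p : MvPolynomial ℤ ℂ) :
    (Function.support fun s : ℤ × ℤ => if i < s.1 ∧ i < s.2 then
      X (s.1 + s.2 - i) * pderiv s.1 (pderiv s.2 p) else 0).Finite := by
  refine (DD_support_finite p).subset fun s hs => ?_
  simp only [Function.mem_support] at hs
  simp only [Set.mem_setOf_eq]
  intro h0
  apply hs
  rw [h0, mul_zero]
  split <;> rfl

lemma Eop_add (i : ℤ) (p q : MvPolynomial ℤ ℂ) :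
    Eop i (p + q) = Eop i p + Eop i q := by
  unfold Eop
  rw [← finsum_add_distrib (F_support_finite i p) (F_support_finite i q)]
  refine finsum_congr fun s => ?_
  split
  · rw [map_add, map_add, mul_add]
  · rw [add_zero]

lemma Eop_sum {β : Type*} (i : ℤ) (t : Finset β) (f : β → MvPolynomial ℤ ℂ) :
    Eop i (∑ j ∈ t, f j) = ∑ j ∈ t, Eop i (f j) :=
  map_sum (AddMonoidHom.mk' (Eop i) fun p q => Eop_add i p q) f t

lemma Eop_iter_sum {β : Type*} (i : ℤ) (n : ℕ) (t : Finset β) (f : β → MvPolynomial ℤ ℂ) :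
    (Eop i)^[n] (∑ j ∈ t, f j) = ∑ j ∈ t, (Eop i)^[n] (f j) := by
  induction n generalizing f with
  | zero => simp
  | succ n ih =>
    rw [Function.iterate_succ_apply, Eop_sum, ih]
    exact Finset.sum_congr rfl fun j _ => by rw [Function.iterate_succ_apply]

lemma choose_two (n : ℕ) : 2 * (n + 2).choose 2 = (n + 2) * (n + 1) := by
  have h : Even ((n + 1) * (n + 2)) := Nat.even_mul_succ_self (n + 1)
  rw [Nat.choose_two_right]
  have : n + 2 - 1 = n + 1 := by omega
  rw [this]
  obtain ⟨r, hr⟩ := h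
  rw [mul_comm (n + 2) (n + 1), hr]
  omega

lemma key (i : ℤ) : ∀ N (g : Fin (N + 1) → ℤ), (∀ k, i < g k) →
    (Eop i)^[N] (∏ k, (X (g k) : MvPolynomial ℤ ℂ)) =
      ((2 : ℂ) ^ N * ∏ s ∈ Finset.Icc 2 (N + 1), (Nat.choose s 2 : ℂ)) •
        X ((∑ k, g k) - N * i) := by
  intro N
  induction N with
  | zero =>
    intro g hg
    simp
  | succ N ih =>
    intro g hg
    rw [Function.iterate_succ_apply,
      show (∏ k, (X (g k) : MvPolynomial ℤ ℂ)) = ∏ k ∈ Finset.univ, X (g k) from rfl,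
      Eop_prod_X i Finset.univ g (fun k _ => hg k), Eop_iter_sum,
      Finset.sum_congr rfl fun k _ => Eop_iter_sum i N _ _]
    have hcN := choose_two N
    have hterm : ∀ k : Fin (N + 2), ∀ l ∈ Finset.univ.erase k,
        (Eop i)^[N] (X (g l + g k - i) *
          ∏ m ∈ ((Finset.univ.erase k).erase l), (X (g m) : MvPolynomial ℤ ℂ)) =
        ((2 : ℂ) ^ N * ∏ s ∈ Finset.Icc 2 (N + 1), (Nat.choose s 2 : ℂ)) •
          X (((∑ m, g m) - i) - N * i) := by
      intro k l hl
      have hlk : l ≠ k := (Finset.mem_erase.1 hl).1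
      have hcard : ((Finset.univ.erase k).erase l).card = N := by
        rw [Finset.card_erase_of_mem hl, Finset.card_erase_of_mem (Finset.mem_univ k)]
        simp
      set s2 := (Finset.univ.erase k).erase l with hs2
      have e : Fin N ≃ ↥s2 :=
        (Fintype.equivFinOfCardEq (by rw [Fintype.card_coe, hcard])).symm
      set h : Fin (N + 1) → ℤ := Fin.cons (g l + g k - i) (fun j => g ((e j) : Fin (N + 2)))
        with hh
      have hprod : (∏ j, (X (h j) : MvPolynomial ℤ ℂ)) =
          X (g l + g k - i) * ∏ m ∈ s2, (X (g m) : MvPolynomial ℤ ℂ) := by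
        rw [Fin.prod_univ_succ]
        simp only [hh, Fin.cons_zero, Fin.cons_succ]
        congr 1
        rw [Equiv.prod_comp e (fun x : ↥s2 => (X (g ↑x) : MvPolynomial ℤ ℂ))]
        exact Finset.prod_attach s2 (fun m => (X (g m) : MvPolynomial ℤ ℂ))
      have hpos : ∀ j, i < h j := by
        intro j
        refine Fin.cases ?_ ?_ j
        · rw [hh, Fin.cons_zero]
          have := hg l; have := hg k; omega
        · intro j'
          rw [hh, Fin.cons_succ]
          exact hg _
      have hsum : (∑ j, h j) = (∑ m, g m) - i := by
        rw [Fin.sum_univ_succ]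
        simp only [hh, Fin.cons_zero, Fin.cons_succ]
        rw [Equiv.sum_comp e (fun x : ↥s2 => g ↑x)]
        have hcoe : ∑ x : ↥s2, g ↑x = ∑ m ∈ s2, g m := Finset.sum_attach s2 g
        rw [hcoe]
        have e1 : g l + ∑ m ∈ s2, g m = ∑ m ∈ Finset.univ.erase k, g m :=
          Finset.add_sum_erase _ g hl
        have e2 : g k + ∑ m ∈ Finset.univ.erase k, g m = ∑ m, g m :=
          Finset.add_sum_erase _ g (Finset.mem_univ k)
        omega
      rw [← hprod, ih h hpos, hsum]
    rw [Finset.sum_congr rfl fun k hk => Finset.sum_congr rfl fun l hl => hterm k l hl]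
    have hcard' : ∀ x : Fin (N + 2), (Finset.univ.erase x).card = N + 1 := fun x => by
      rw [Finset.card_erase_of_mem (Finset.mem_univ x), Finset.card_univ, Fintype.card_fin]
      omega
    simp only [Finset.sum_const, hcard', Finset.card_univ, Fintype.card_fin]
    rw [← Nat.cast_smul_eq_nsmul ℂ, ← Nat.cast_smul_eq_nsmul ℂ, smul_smul, smul_smul]
    have harg : ((∑ m, g m) - i) - (N : ℤ) * i = (∑ m, g m) - ((N + 1 : ℕ) : ℤ) * i := by
      push_cast; ring
    rw [harg]
    congr 1
    rw [Finset.prod_Icc_succ_top (by omega : 2 ≤ N + 1 + 1)]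
    have h2 : (2 : ℂ) * (((N + 1 + 1).choose 2 : ℕ) : ℂ) = ((N : ℂ) + 2) * ((N : ℂ) + 1) := by
      exact_mod_cast choose_two N
    push_cast
    linear_combination (-((2 : ℂ) ^ N * ∏ s ∈ Finset.Icc 2 (N + 1), (s.choose 2 : ℂ))) * h2


/-- `E_i^N (x_{i₁} ⋯ x_{i_{N+1}}) = c_N x_M`. -/
theorem stmt3 (N : ℕ) (hN : 1 ≤ N) (i : ℤ) (idx : Fin (N + 1) → ℤ)
    (hidx : ∀ k, i < idx k) :
    (Eop i)^[N] (∏ k, X (idx k)) =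
      ((2 : ℂ) ^ N * ∏ s ∈ Finset.Icc 2 (N + 1), (Nat.choose s 2 : ℂ)) •
        X ((∑ k, idx k) - N * i) := by
  exact key i N idx hidx
end

section
/- Let J, K ∈ ℂ and define operators on ℂ[x_n : n∈ℤ][y_m : m≥1] (allowing formal power series of differential operators): F_n = multiplication by x_n, and H_n = -2 ∑_{m∈ℤ} x_{m+n} ∂x_m + [n<0] y_{-n} + [n>0] 2nK ∂y_n + δ_{n,0} J. Then for all integers m, n: [H_m, F_n] = -2 F_{m+n} as operators on ℂ[x, y]. -/
open MvPolynomial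

/-- Index type for the variables `x_n (n ∈ ℤ)` and `y_m (m ≥ 1)`. -/
abbrev XYVar : Type := ℤ ⊕ ℕ+

/-- `F_n` : multiplication by `x_n`. -/
noncomputable def Fop (n : ℤ) (p : MvPolynomial XYVar ℂ) : MvPolynomial XYVar ℂ :=
  X (Sum.inl n) * p

/-- `H_n = -2 ∑_{m∈ℤ} x_{m+n} ∂x_m + [n<0] y_{-n} + [n>0] 2nK ∂y_n + δ_{n,0} J`. -/
noncomputable def Hop (J K : ℂ) (n : ℤ) (p : MvPolynomial XYVar ℂ) : MvPolynomial XYVar ℂ :=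
  (-2 : ℂ) • (∑ᶠ m : ℤ, X (Sum.inl (m + n)) * pderiv (Sum.inl m) p) +
    (if h : n < 0 then X (Sum.inr ⟨(-n).toNat, by omega⟩) * p else 0) +
    (if h : 0 < n then ((2 * n : ℤ) : ℂ) • (K • pderiv (Sum.inr ⟨n.toNat, by omega⟩) p) else 0) +
    (if n = 0 then J • p else 0)

lemma fin_supp (m : ℤ) (p : MvPolynomial XYVar ℂ) :
    (Function.support fun k : ℤ => X (Sum.inl (k + m)) * pderiv (Sum.inl k) p).Finite := by
  apply Set.Finite.subset (Set.Finite.preimage (Sum.inl_injective.injOn)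
    (p.vars.finite_toSet))
  intro k hk
  simp only [Function.mem_support] at hk
  by_contra h
  exact hk (by rw [pderiv_eq_zero_of_notMem_vars (by simpa using h), mul_zero])

lemma key_s6 (m n : ℤ) (p : MvPolynomial XYVar ℂ) :
    (∑ᶠ k : ℤ, X (Sum.inl (k + m)) * pderiv (Sum.inl k) (X (Sum.inl n) * p)) =
      X (Sum.inl n) * (∑ᶠ k : ℤ, X (Sum.inl (k + m)) * pderiv (Sum.inl k) p) +
        X (Sum.inl (n + m)) * p := by
  have h1 : ∀ k : ℤ, X (Sum.inl (k + m)) * pderiv (Sum.inl k) (X (Sum.inl n) * p) =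
      X (Sum.inl n) * (X (Sum.inl (k + m)) * pderiv (Sum.inl k) p) +
        (if k = n then X (Sum.inl (k + m)) * p else 0) := by
    intro k
    rw [pderiv_mul]
    by_cases hk : k = n
    · subst hk
      simp [pderiv_X_self]
      ring
    · rw [pderiv_X_of_ne (by simpa using Ne.symm hk)]
      simp [hk]
      ring
  have h2 : (∑ᶠ k : ℤ, (if k = n then X (Sum.inl (k + m)) * p else 0)) =
      X (Sum.inl (n + m)) * p := by
    rw [finsum_eq_single _ n (fun b hb => if_neg hb), if_pos rfl]
  calc (∑ᶠ k : ℤ, X (Sum.inl (k + m)) * pderiv (Sum.inl k) (X (Sum.inl n) * p))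
      = ∑ᶠ k : ℤ, (X (Sum.inl n) * (X (Sum.inl (k + m)) * pderiv (Sum.inl k) p) +
          (if k = n then X (Sum.inl (k + m)) * p else 0)) := finsum_congr h1
    _ = (∑ᶠ k : ℤ, X (Sum.inl n) * (X (Sum.inl (k + m)) * pderiv (Sum.inl k) p)) +
          ∑ᶠ k : ℤ, (if k = n then X (Sum.inl (k + m)) * p else 0) := by
        apply finsum_add_distrib
        · exact ((fin_supp m p).subset (by
            intro k hk
            simp only [Function.mem_support] at hk ⊢
            intro h
            exact hk (by rw [h, mul_zero])))
        · exact Set.Finite.subset (Set.finite_singleton n) (by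
            intro k hk
            simp only [Function.mem_support] at hk
            by_contra h
            simp only [Set.mem_singleton_iff] at h
            exact hk (if_neg h))
    _ = X (Sum.inl n) * (∑ᶠ k : ℤ, X (Sum.inl (k + m)) * pderiv (Sum.inl k) p) +
          X (Sum.inl (n + m)) * p := by
        rw [← mul_finsum' _ _ (fin_supp m p), h2]

/-- `[H_m, F_n] = -2 F_{m+n}` as operators on `ℂ[x, y]`. -/
theorem stmt6 (J K : ℂ) (m n : ℤ) (p : MvPolynomial XYVar ℂ) :
    Hop J K m (Fop n p) - Fop n (Hop J K m p) = (-2 : ℂ) • Fop (m + n) p := by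
  unfold Hop Fop
  rw [key_s6 m n p, show m + n = n + m from add_comm m n]
  by_cases hm : m < 0
  · simp only [dif_pos hm, dif_neg (show ¬ (0 < m) by omega),
      if_neg (show ¬ m = 0 by omega), smul_eq_C_mul]
    ring
  · by_cases hm' : 0 < m
    · simp only [dif_neg hm, dif_pos hm', if_neg (show ¬ m = 0 by omega)]
      rw [pderiv_mul, pderiv_X_of_ne (by simp)]
      simp only [smul_eq_C_mul]
      ring
    · have h0 : m = 0 := by omega
      subst h0
      simp only [dif_neg hm, dif_neg hm', if_pos rfl, if_true, smul_eq_C_mul]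
      ring
end
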